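/- Given f : ℝ → ℝ with f(r) ≠ 0 for every rational r ∈ [0,1], the function g_f is 𝒞-continuous: for every open set G ⊆ ℝ, the preimage {x ∈ ℝ : g_f(x) ∈ G} can be written as O ∩ A where O ⊆ ℝ is open and A ⊆ ℝ satisfies A ⊆ interior(closure(A)). -/
import Mathlib


open Classical in
/-- The function `g_f`. -/
noncomputable def gf (f : ℝ → ℝ) (x : ℝ) : ℝ :=
  if ∃ q : ℚ, x + (q : ℝ) ∈ Set.Icc (0:ℝ) 1 ∧ f (x + (q : ℝ)) = 0 then 1 else 0

theorem gf_C_continuous (f : ℝ → ℝ)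
    (hf : ∀ r : ℚ, (r : ℝ) ∈ Set.Icc (0:ℝ) 1 → f r ≠ 0) :
    ∀ G : Set ℝ, IsOpen G →
      ∃ O A : Set ℝ, IsOpen O ∧ A ⊆ interior (closure A) ∧
        {x : ℝ | gf f x ∈ G} = O ∩ A := by
  intro G hG
  set P : ℝ → Prop := fun x => ∃ q : ℚ, x + (q : ℝ) ∈ Set.Icc (0:ℝ) 1 ∧ f (x + (q : ℝ)) = 0
    with hP
  set S : Set ℝ := {x : ℝ | gf f x ∈ G} with hS
  -- rationals are not in Z
  have hrat : ∀ r : ℚ, ¬ P (r : ℝ) := by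
    intro r ⟨q, hq1, hq2⟩
    have : ((r + q : ℚ) : ℝ) = (r : ℝ) + (q : ℝ) := by push_cast; ring
    exact hf (r + q) (this ▸ hq1) (by rw [this]; exact hq2)
  -- Z is invariant under rational translation, so dense if nonempty
  have hZdense : (∃ x, P x) → Dense {x | P x} := by
    rintro ⟨x, hx⟩
    intro y
    rw [Metric.mem_closure_iff]
    intro ε hε
    obtain ⟨p, hp⟩ := exists_rat_near (y - x) hε
    refine ⟨x + (p : ℝ), ?_, ?_⟩
    · obtain ⟨q, hq1, hq2⟩ := hx
      have e : x + (p : ℝ) + ((q - p : ℚ) : ℝ) = x + (q : ℝ) := by push_cast; ring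
      exact ⟨q - p, by rw [e]; exact ⟨hq1, hq2⟩⟩
    · rw [Real.dist_eq]
      have : |y - (x + (p:ℝ))| = |(y - x) - (p:ℝ)| := by ring_nf
      rw [this]; exact hp
  -- value of gf
  have hval : ∀ x, (P x → gf f x = 1) ∧ (¬ P x → gf f x = 0) := by
    intro x
    constructor <;> intro h <;> simp only [gf, hP] at *
    · rw [if_pos h]
    · rw [if_neg h]
  -- S is empty or dense
  have key : S ⊆ interior (closure S) := by
    by_cases h0 : (0:ℝ) ∈ G
    · -- S contains all rationals, hence dense
      have hd : Dense S := by
        have : Set.range ((↑) : ℚ → ℝ) ⊆ S := by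
          rintro _ ⟨r, rfl⟩
          show gf f r ∈ G
          rw [(hval r).2 (hrat r)]; exact h0
        exact Rat.denseRange_cast.mono this
      rw [hd.closure_eq, interior_univ]; exact Set.subset_univ S
    · by_cases h1 : (1:ℝ) ∈ G
      · -- S = Z
        have hSZ : S = {x | P x} := by
          ext x
          simp only [hS, Set.mem_setOf_eq]
          constructor
          · intro hx
            by_contra hc
            rw [(hval x).2 hc] at hx; exact h0 hx
          · intro hx; rw [(hval x).1 hx]; exact h1
        by_cases hne : ∃ x, P x
        · have hd : Dense S := hSZ ▸ hZdense hne
          rw [hd.closure_eq, interior_univ]; exact Set.subset_univ S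
        · have : S = ∅ := by
            rw [hSZ]; push_neg at hne; exact Set.eq_empty_iff_forall_notMem.mpr hne
          rw [this]; exact Set.empty_subset _
      · -- S = ∅
        have : S = ∅ := by
          apply Set.eq_empty_iff_forall_notMem.mpr
          intro x hx
          by_cases hp : P x
          · rw [hS, Set.mem_setOf_eq, (hval x).1 hp] at hx; exact h1 hx
          · rw [hS, Set.mem_setOf_eq, (hval x).2 hp] at hx; exact h0 hx
        rw [this]; exact Set.empty_subset _
  exact ⟨Set.univ, S, isOpen_univ, key, (Set.univ_inter S).symm⟩
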